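/- Let V be a real inner product space and let ᾱ₁, α₂, ᾱ₃, ᾱ₄, β₁, β₂, β₃, β̄₄ ∈ V satisfy: ⟪β₁,β₁⟫ = ⟪ᾱ₁,ᾱ₁⟫ = ⟪α₂,α₂⟫ = ⟪ᾱ₃,ᾱ₃⟫ = 2; ⟪β₁,ᾱ₁⟫ = ⟪β₁,α₂⟫ = ⟪β₁,ᾱ₃⟫ = −1 and ⟪ᾱ₁,α₂⟫ = ⟪ᾱ₁,ᾱ₃⟫ = ⟪α₂,ᾱ₃⟫ = 0; each of β₁, ᾱ₁, α₂, ᾱ₃ is orthogonal to β̄₄; ⟪ᾱ₁,β₂⟫ + ⟪α₂,β₂⟫ = 0 and ⟪ᾱ₃,β₂⟫ = ⟪β₁,β₂⟫ = 0; ⟪α₂,β₃⟫ + ⟪ᾱ₃,β₃⟫ = 0 and ⟪ᾱ₁,β₃⟫ = ⟪β₁,β₃⟫ = 0; ⟪β₁,ᾱ₄⟫ = 0 and ⟪ᾱ₁,ᾱ₄⟫ = ⟪α₂,ᾱ₄⟫ = ⟪ᾱ₃,ᾱ₄⟫ = 0 (the relevant Gram relations of the Carter diagram E₈(a₇)). Set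 α₁ := −(2β₁ + ᾱ₁ + α₂ + ᾱ₃). Then ⟪α₁,α₁⟫ = 2, ⟪α₁,β₁⟫ = −1, and α₁ is orthogonal to each of α₂, ᾱ₃, ᾱ₄, β₂, β₃, β̄₄ (the Gram relations of the Carter diagram E₈(a₅)). -/
import Mathlib


open scoped RealInnerProductSpace


theorem stmt14 {V : Type*} [NormedAddCommGroup V] [InnerProductSpace ℝ V]
    (αb₁ α₂ αb₃ αb₄ β₁ β₂ β₃ βb₄ : V)
    (h0 : ⟪β₁, β₁⟫ = 2)
    (h1 : ⟪αb₁, αb₁⟫ = 2)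
    (h2 : ⟪α₂, α₂⟫ = 2)
    (h3 : ⟪αb₃, αb₃⟫ = 2)
    (h4 : ⟪β₁, αb₁⟫ = -1)
    (h5 : ⟪β₁, α₂⟫ = -1)
    (h6 : ⟪β₁, αb₃⟫ = -1)
    (h7 : ⟪αb₁, α₂⟫ = 0)
    (h8 : ⟪αb₁, αb₃⟫ = 0)
    (h9 : ⟪α₂, αb₃⟫ = 0)
    (h10 : ⟪β₁, βb₄⟫ = 0)
    (h11 : ⟪αb₁, βb₄⟫ = 0)
    (h12 : ⟪α₂, βb₄⟫ = 0)
    (h13 : ⟪αb₃, βb₄⟫ = 0)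
    (h14 : ⟪αb₁, β₂⟫ + ⟪α₂, β₂⟫ = 0)
    (h15 : ⟪αb₃, β₂⟫ = 0)
    (h16 : ⟪β₁, β₂⟫ = 0)
    (h17 : ⟪α₂, β₃⟫ + ⟪αb₃, β₃⟫ = 0)
    (h18 : ⟪αb₁, β₃⟫ = 0)
    (h19 : ⟪β₁, β₃⟫ = 0)
    (h20 : ⟪β₁, αb₄⟫ = 0)
    (h21 : ⟪αb₁, αb₄⟫ = 0)
    (h22 : ⟪α₂, αb₄⟫ = 0)
    (h23 : ⟪αb₃, αb₄⟫ = 0)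
    (α₁ : V) (hdef : α₁ = -((2:ℝ) • β₁ + αb₁ + α₂ + αb₃)) :
    ⟪α₁, α₁⟫ = 2 ∧
    ⟪α₁, β₁⟫ = -1 ∧
    ⟪α₁, α₂⟫ = 0 ∧
    ⟪α₁, αb₃⟫ = 0 ∧
    ⟪α₁, αb₄⟫ = 0 ∧
    ⟪α₁, β₂⟫ = 0 ∧
    ⟪α₁, β₃⟫ = 0 ∧
    ⟪α₁, βb₄⟫ = 0 := by
  subst hdef
  have c1 := real_inner_comm αb₁ β₁
  have c2 := real_inner_comm α₂ β₁
  have c3 := real_inner_comm αb₃ β₁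
  have c4 := real_inner_comm α₂ αb₁
  have c5 := real_inner_comm αb₃ αb₁
  have c6 := real_inner_comm αb₃ α₂
  simp only [inner_neg_left, inner_add_left, inner_neg_right, inner_add_right,
    inner_smul_left, inner_smul_right, RCLike.ofReal_real_eq_id, id_eq, conj_trivial] at *
  refine ⟨by linarith, by linarith, by linarith, by linarith, by linarith, by linarith, by linarith, by linarith⟩
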